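/- Let V be a finite set, let Δ > 0 and σ ≥ 0 be real numbers, let C ⊆ V be nonempty, and let s, s' : V → ℝ be functions with s(v) ≥ 0, s'(v) ≥ 0 and |s(v) − s'(v)| ≤ Δ for every v ∈ V. Let u₁, …, u_K be pairwise distinct elements of C with K ≤ |C|, and define P_s = ∏_{k=1}^{K} (s(u_k)+Δ+1)^σ / (∑_{w ∈ C∖{u₁,…,u_{k−1}}} (s(w)+Δ+1)^σ), and P_{s'} analogously with s replaced by s'. Then |log(P_s / P_{s'})| ≤ 2Kσ·log(1+Δ). -/

import Mathlib

open Finset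

lemma log_abs_sub_le {a b c : ℝ} (ha : 0 < a) (hb : 0 < b) (hc : 1 ≤ c)
    (h1 : a ≤ c * b) (h2 : b ≤ c * a) : |Real.log a - Real.log b| ≤ Real.log c := by
  have hc0 : (0:ℝ) < c := by linarith
  rw [abs_le]
  constructor
  · have h := Real.log_le_log hb h2
    rw [Real.log_mul hc0.ne' ha.ne'] at h
    linarith
  · have h := Real.log_le_log ha h1
    rw [Real.log_mul hc0.ne' hb.ne'] at h
    linarith

/-- DPLP is `2Kσ·log(1+Δ)`-differentially private. -/
theorem dplp_privacy {V : Type*} [Fintype V] [DecidableEq V]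
    (Δ σ : ℝ) (hΔ : 0 < Δ) (hσ : 0 ≤ σ)
    (C : Finset V) (hC : C.Nonempty)
    (s s' : V → ℝ)
    (hs : ∀ v, 0 ≤ s v) (hs' : ∀ v, 0 ≤ s' v)
    (hsens : ∀ v, |s v - s' v| ≤ Δ)
    (K : ℕ) (u : Fin K → V) (hu : Function.Injective u)
    (huC : ∀ k, u k ∈ C) (hK : K ≤ C.card) :
    |Real.log
        ((∏ k : Fin K, (s (u k) + Δ + 1) ^ σ /
            ∑ w ∈ C \ Finset.image u (Finset.univ.filter (fun j => j < k)),
              (s w + Δ + 1) ^ σ) /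
         (∏ k : Fin K, (s' (u k) + Δ + 1) ^ σ /
            ∑ w ∈ C \ Finset.image u (Finset.univ.filter (fun j => j < k)),
              (s' w + Δ + 1) ^ σ))|
      ≤ 2 * K * σ * Real.log (1 + Δ) := by
  set c : ℝ := (1 + Δ) ^ σ with hc_def
  have h1Δ : (0:ℝ) < 1 + Δ := by linarith
  have hc1 : 1 ≤ c := by
    rw [hc_def]
    calc (1:ℝ) = 1 ^ σ := (Real.one_rpow σ).symm
    _ ≤ (1 + Δ) ^ σ := Real.rpow_le_rpow zero_le_one (by linarith) hσ
  have hc0 : (0:ℝ) < c := by linarith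
  -- pointwise positivity
  have hpos : ∀ (x : ℝ), 0 ≤ x → 0 < (x + Δ + 1) ^ σ := fun x hx =>
    Real.rpow_pos_of_pos (by linarith) σ
  -- pointwise comparison
  have hcmp : ∀ (x y : ℝ), 0 ≤ x → 0 ≤ y → |x - y| ≤ Δ →
      (x + Δ + 1) ^ σ ≤ c * (y + Δ + 1) ^ σ := by
    intro x y hx hy hxy
    have h := abs_le.mp hxy
    have hle : x + Δ + 1 ≤ (1 + Δ) * (y + Δ + 1) := by nlinarith
    calc (x + Δ + 1) ^ σ ≤ ((1 + Δ) * (y + Δ + 1)) ^ σ :=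
          Real.rpow_le_rpow (by linarith) hle hσ
    _ = c * (y + Δ + 1) ^ σ := Real.mul_rpow (by linarith) (by linarith)
  -- the denominator sets are nonempty
  set D : Fin K → Finset V :=
    fun k => C \ Finset.image u (Finset.univ.filter (fun j => j < k)) with hD
  have hDne : ∀ k, (D k).Nonempty := by
    intro k
    rw [hD, Finset.sdiff_nonempty]
    intro hsub
    have h1 : C.card ≤ (Finset.image u (Finset.univ.filter (fun j => j < k))).card :=
      Finset.card_le_card hsub
    have h2 : (Finset.image u (Finset.univ.filter (fun j => j < k))).card ≤
        (Finset.univ.filter (fun j : Fin K => j < k)).card := Finset.card_image_le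
    have h3 : (Finset.univ.filter (fun j : Fin K => j < k)).card ≤ k.val := by
      have := Finset.card_le_card_of_injOn (f := Fin.val)
        (s := Finset.univ.filter (fun j : Fin K => j < k)) (t := Finset.range k.val)
        (by intro j hj; simp only [Finset.coe_filter, Finset.mem_filter, Finset.mem_coe, Set.mem_setOf_eq] at hj
            simpa [Finset.mem_range] using hj.2)
        (fun a _ b _ h => Fin.val_injective h)
      simpa using this
    have h4 := k.isLt
    omega
  -- define the four quantities
  set A : Fin K → ℝ := fun k => (s (u k) + Δ + 1) ^ σ with hA
  set A' : Fin K → ℝ := fun k => (s' (u k) + Δ + 1) ^ σ with hA'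
  set B : Fin K → ℝ := fun k => ∑ w ∈ D k, (s w + Δ + 1) ^ σ with hB
  set B' : Fin K → ℝ := fun k => ∑ w ∈ D k, (s' w + Δ + 1) ^ σ with hB'
  have hApos : ∀ k, 0 < A k := fun k => hpos _ (hs _)
  have hA'pos : ∀ k, 0 < A' k := fun k => hpos _ (hs' _)
  have hBpos : ∀ k, 0 < B k := fun k =>
    Finset.sum_pos (fun w _ => hpos _ (hs w)) (hDne k)
  have hB'pos : ∀ k, 0 < B' k := fun k =>
    Finset.sum_pos (fun w _ => hpos _ (hs' w)) (hDne k)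
  -- log bounds per factor
  have hlogA : ∀ k, |Real.log (A k) - Real.log (A' k)| ≤ Real.log c := by
    intro k
    exact log_abs_sub_le (hApos k) (hA'pos k) hc1
      (hcmp _ _ (hs _) (hs' _) (hsens _))
      (hcmp _ _ (hs' _) (hs _) (by rw [abs_sub_comm]; exact hsens _))
  have hlogB : ∀ k, |Real.log (B k) - Real.log (B' k)| ≤ Real.log c := by
    intro k
    refine log_abs_sub_le (hBpos k) (hB'pos k) hc1 ?_ ?_
    · rw [hB, hB', Finset.mul_sum]
      exact Finset.sum_le_sum fun w _ => hcmp _ _ (hs w) (hs' w) (hsens w)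
    · rw [hB, hB', Finset.mul_sum]
      exact Finset.sum_le_sum fun w _ =>
        hcmp _ _ (hs' w) (hs w) (by rw [abs_sub_comm]; exact hsens w)
  -- rewrite the big log as a sum
  have hPpos : 0 < ∏ k : Fin K, A k / B k :=
    Finset.prod_pos fun k _ => div_pos (hApos k) (hBpos k)
  have hQpos : 0 < ∏ k : Fin K, A' k / B' k :=
    Finset.prod_pos fun k _ => div_pos (hA'pos k) (hB'pos k)
  have hrw : Real.log ((∏ k : Fin K, A k / B k) / (∏ k : Fin K, A' k / B' k)) =
      ∑ k : Fin K, ((Real.log (A k) - Real.log (A' k)) -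
        (Real.log (B k) - Real.log (B' k))) := by
    rw [Real.log_div hPpos.ne' hQpos.ne',
      Real.log_prod (fun k _ => (div_pos (hApos k) (hBpos k)).ne'),
      Real.log_prod (fun k _ => (div_pos (hA'pos k) (hB'pos k)).ne'),
      ← Finset.sum_sub_distrib]
    refine Finset.sum_congr rfl fun k _ => ?_
    rw [Real.log_div (hApos k).ne' (hBpos k).ne',
      Real.log_div (hA'pos k).ne' (hB'pos k).ne']
    ring
  rw [hrw]
  calc |∑ k : Fin K, ((Real.log (A k) - Real.log (A' k)) -
        (Real.log (B k) - Real.log (B' k)))|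
      ≤ ∑ k : Fin K, |(Real.log (A k) - Real.log (A' k)) -
        (Real.log (B k) - Real.log (B' k))| := Finset.abs_sum_le_sum_abs _ _
    _ ≤ ∑ _k : Fin K, (2 * Real.log c) := by
        refine Finset.sum_le_sum fun k _ => ?_
        calc |(Real.log (A k) - Real.log (A' k)) -
            (Real.log (B k) - Real.log (B' k))|
            ≤ |Real.log (A k) - Real.log (A' k)| +
              |Real.log (B k) - Real.log (B' k)| := abs_sub _ _
          _ ≤ 2 * Real.log c := by have := hlogA k; have := hlogB k; linarith
    _ = K * (2 * Real.log c) := by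
        rw [Finset.sum_const, Finset.card_univ, Fintype.card_fin, nsmul_eq_mul]
    _ = 2 * K * σ * Real.log (1 + Δ) := by
        rw [hc_def, Real.log_rpow h1Δ]; ring
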